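/- arXiv:1003.5783 — 3 statements merged into one kernel-verified Lean document; each statement's English description precedes it below -/
import Mathlib

section
/- Let G be a connected s-regular finite loopless multigraph with an even number of vertices. Then r(G) ≠ 1. -/
/-- A finite multigraph: finite vertex and edge types together with an incidence map
assigning to each edge an unordered pair of vertices. -/
structure Mgraph where
  V : Type
  E : Type
  [finV : Finite V]
  [finE : Finite E]
  inc : E → Sym2 V

attribute [instance] Mgraph.finV Mgraph.finE

namespace Mgraph

/-- A multigraph is loopless if no edge joins a vertex to itself. -/
def Loopless (G : Mgraph) : Prop := ∀ e : G.E, ¬ (G.inc e).IsDiag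

/-- The degree of a vertex: the number of edges incident with it. -/
noncomputable def degree (G : Mgraph) (v : G.V) : ℕ :=
  Nat.card {e : G.E // v ∈ G.inc e}

/-- The maximum degree Δ(G). -/
noncomputable def maxDegree (G : Mgraph) : ℕ :=
  sSup (Set.range G.degree)

/-- `G` is `s`-regular. -/
def Regular (G : Mgraph) (s : ℕ) : Prop := ∀ v : G.V, G.degree v = s

/-- A proper edge coloring with `k` colors: adjacent (distinct, sharing an endpoint)
edges receive different colors. -/
def IsProperEdgeColoring (G : Mgraph) {k : ℕ} (c : G.E → Fin k) : Prop :=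
  ∀ e f : G.E, e ≠ f → (∃ v : G.V, v ∈ G.inc e ∧ v ∈ G.inc f) → c e ≠ c f

/-- `G` admits a proper edge coloring with `k` colors. -/
def EdgeColorable (G : Mgraph) (k : ℕ) : Prop :=
  ∃ c : G.E → Fin k, G.IsProperEdgeColoring c

/-- The chromatic index χ'(G). -/
noncomputable def chromaticIndex (G : Mgraph) : ℕ :=
  sInf {k : ℕ | G.EdgeColorable k}

/-- `G` is class 1, i.e. χ'(G) = Δ(G). -/
noncomputable def ClassOne (G : Mgraph) : Prop := G.chromaticIndex = G.maxDegree

/-- Delete a set of edges from `G`. -/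
def deleteEdges (G : Mgraph) (S : Set G.E) : Mgraph where
  V := G.V
  E := {e : G.E // e ∉ S}
  inc e := G.inc e.1

/-- Delete a set of vertices from `G`, together with all incident edges. -/
def deleteVerts (G : Mgraph) (S : Set G.V) : Mgraph where
  V := {v : G.V // v ∉ S}
  E := {e : G.E // ∀ v : G.V, v ∈ G.inc e → v ∉ S}
  inc e := (G.inc e.1).pmap (fun v hv => ⟨v, hv⟩) e.2

/-- The simple graph on `V(G)` whose adjacency is realized by the edges in `F`. -/
def factorGraph (G : Mgraph) (F : Set G.E) : SimpleGraph G.V where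
  Adj u w := u ≠ w ∧ ∃ e ∈ F, G.inc e = s(u, w)
  symm := ⟨by
    rintro u w ⟨hne, e, heF, he⟩
    exact ⟨hne.symm, e, heF, by rw [he]; exact Sym2.eq_swap⟩⟩
  loopless := ⟨by rintro v ⟨hne, -⟩; exact hne rfl⟩

/-- `G` is connected (in particular nonempty). -/
def Connected (G : Mgraph) : Prop := (G.factorGraph Set.univ).Connected

/-- `G` is 2-connected: it has at least 3 vertices and deleting any single vertex
leaves a connected graph. -/
def TwoConnected (G : Mgraph) : Prop :=
  3 ≤ Nat.card G.V ∧ ∀ v : G.V, (G.deleteVerts {v}).Connected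

/-- The number of odd cycles in the spanning subgraph of `G` with edge set `F`:
the number of connected components of odd cardinality. -/
noncomputable def oddCycles (G : Mgraph) (F : Set G.E) : ℕ :=
  Nat.card {C : (G.factorGraph F).ConnectedComponent //
    Odd (Nat.card {v : G.V // (G.factorGraph F).connectedComponentMk v = C})}

/-- `F` is a 1-factor (perfect matching): every vertex meets exactly one edge of `F`. -/
def IsOneFactor (G : Mgraph) (F : Set G.E) : Prop :=
  ∀ v : G.V, Nat.card {e : G.E // e ∈ F ∧ v ∈ G.inc e} = 1

/-- `F` is a 2-factor (spanning 2-regular subgraph): every vertex meets exactly two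
edges of `F`. -/
def IsTwoFactor (G : Mgraph) (F : Set G.E) : Prop :=
  ∀ v : G.V, Nat.card {e : G.E // e ∈ F ∧ v ∈ G.inc e} = 2

/-- `f` encodes a decomposition of the edge set of `G` into `n` 2-factors
(the fibers of `some i`), together with, possibly, one 1-factor (the fiber of `none`,
which is required to be empty when no 1-factor is used). -/
def IsDecomp (G : Mgraph) {n : ℕ} (f : G.E → Option (Fin n)) : Prop :=
  ((∀ e : G.E, f e ≠ none) ∨ G.IsOneFactor {e | f e = none}) ∧
    ∀ i : Fin n, G.IsTwoFactor {e | f e = some i}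

/-- The total number of odd cycles of the 2-factors of a decomposition. -/
noncomputable def decompOdd (G : Mgraph) {n : ℕ} (f : G.E → Option (Fin n)) : ℕ :=
  ∑ i : Fin n, G.oddCycles {e | f e = some i}

/-- The oddness ξ(G): the minimum total number of odd cycles over all decompositions of
the edge set into 2-factors (together with one 1-factor when the degree is odd);
`⊤` if no such decomposition exists. -/
noncomputable def oddness (G : Mgraph) : ℕ∞ :=
  sInf {k : ℕ∞ | ∃ (n : ℕ) (f : G.E → Option (Fin n)),
    G.IsDecomp f ∧ k = (G.decompOdd f : ℕ∞)}

/-- The minimum number of edges whose removal from `G` leaves a graph that is properly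
edge colorable with `D` colors. -/
noncomputable def resistanceTo (G : Mgraph) (D : ℕ) : ℕ :=
  sInf {k : ℕ | ∃ S : Set G.E, Nat.card S = k ∧ (G.deleteEdges S).EdgeColorable D}

/-- The resistance r(G): the minimum number of edges whose removal from `G` leaves a
Δ(G)-edge-colorable graph. -/
noncomputable def resistance (G : Mgraph) : ℕ := G.resistanceTo G.maxDegree

/-- The vertex resistance r_v(G): the minimum number of vertices whose removal from `G`
leaves a class 1 graph. -/
noncomputable def rv (G : Mgraph) : ℕ :=
  sInf {k : ℕ | ∃ S : Set G.V, Nat.card S = k ∧ (G.deleteVerts S).ClassOne}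

/-- The vertex resistance r'_v(G): the minimum number of vertices whose removal from `G`
leaves a graph `H` with χ'(H) ≤ Δ(G). -/
noncomputable def rv' (G : Mgraph) : ℕ :=
  sInf {k : ℕ | ∃ S : Set G.V, Nat.card S = k ∧
    (G.deleteVerts S).chromaticIndex ≤ G.maxDegree}

/-- The edge boundary ∂_G(X): the set of edges with one endpoint in `X` and one
endpoint outside `X`. -/
def edgeBoundary (G : Mgraph) (X : Set G.V) : Set G.E :=
  {e : G.E | ∃ u ∈ G.inc e, ∃ w ∈ G.inc e, u ∈ X ∧ w ∉ X}

/-- `G` is an `s`-graph: a loopless `s`-regular multigraph with `|∂_G(X)| ≥ s` for every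
odd set `X` of vertices. -/
def IsSGraph (G : Mgraph) (s : ℕ) : Prop :=
  G.Loopless ∧ G.Regular s ∧
    ∀ X : Set G.V, Odd (Nat.card X) → s ≤ Nat.card (G.edgeBoundary X)

end Mgraph

open Mgraph in
/-- A connected `s`-regular finite loopless multigraph of even order has `r(G) ≠ 1`. -/
theorem resistance_ne_one_of_even_order (G : Mgraph) (hG : G.Loopless) (s : ℕ)
    (hreg : G.Regular s) (hconn : G.Connected) (heven : Even (Nat.card G.V)) :
    G.resistance ≠ 1 := by
  classical
  intro hr
  have hneV : Nonempty G.V := hconn.nonempty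
  -- maximum degree is s
  have hΔ : G.maxDegree = s := by
    have hrange : Set.range G.degree = {s} := by
      ext k
      simp only [Set.mem_range, Set.mem_singleton_iff]
      constructor
      · rintro ⟨v, rfl⟩; exact hreg v
      · rintro rfl; obtain ⟨v⟩ := hneV; exact ⟨v, hreg v⟩
    rw [Mgraph.maxDegree, hrange, csSup_singleton]
  simp only [Mgraph.resistance, Mgraph.resistanceTo, hΔ] at hr
  set T : Set ℕ :=
    {k : ℕ | ∃ S : Set G.E, Nat.card S = k ∧ (G.deleteEdges S).EdgeColorable s} with hT
  have hTne : T.Nonempty := by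
    by_contra h
    rw [Set.not_nonempty_iff_eq_empty] at h
    rw [h, Nat.sInf_empty] at hr
    exact absurd hr (by norm_num)
  have h1T : (1 : ℕ) ∈ T := hr ▸ Nat.sInf_mem hTne
  obtain ⟨S, hS1, hcol⟩ := h1T
  obtain ⟨e, rfl⟩ : ∃ e : G.E, S = {e} := by
    rwa [Nat.card_coe_set_eq, Set.ncard_eq_one] at hS1
  obtain ⟨c, hc⟩ := hcol
  haveI : Fintype G.V := Fintype.ofFinite _
  haveI : Fintype G.E := Fintype.ofFinite _
  haveI : Fintype (G.deleteEdges {e}).E := Fintype.ofFinite _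
  -- endpoints of e
  obtain ⟨⟨u, w⟩, he'⟩ := Quot.exists_rep (G.inc e)
  have he : G.inc e = s(u, w) := he'.symm
  have huw : u ≠ w := by
    intro h
    exact hG e (by rw [he, h]; exact Sym2.mk_isDiag_iff.2 rfl)
  have hu : u ∈ G.inc e := by rw [he]; exact Sym2.mem_mk_left u w
  have hw : w ∈ G.inc e := by rw [he]; exact Sym2.mem_mk_right u w
  -- degree as a finset card
  have hdeg : ∀ v : G.V, (Finset.univ.filter fun f : G.E => v ∈ G.inc f).card = s := by
    intro v
    have h1 := hreg v
    rw [Mgraph.degree, Nat.card_eq_fintype_card, Fintype.card_subtype] at h1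
    exact h1
  have hspos : 0 < s := by
    rw [← hdeg u]
    exact Finset.card_pos.2 ⟨e, Finset.mem_filter.2 ⟨Finset.mem_univ _, hu⟩⟩
  -- edges at a vertex in G - e
  set A : G.V → Finset (G.deleteEdges {e}).E :=
    fun v => Finset.univ.filter fun f => v ∈ G.inc f.1 with hA
  have hAimage : ∀ v : G.V,
      (A v).image Subtype.val = (Finset.univ.filter fun f : G.E => v ∈ G.inc f).erase e := by
    intro v
    ext f
    refine Finset.mem_image.trans ?_
    simp only [hA, Finset.mem_image, Finset.mem_filter, Finset.mem_univ, true_and,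
      Finset.mem_erase]
    constructor
    · rintro ⟨g, hg, rfl⟩
      exact ⟨fun h => g.2 (by simp [h]), (Finset.mem_filter.1 hg).2⟩
    · rintro ⟨hfe, hf⟩
      exact ⟨⟨f, by simp [hfe]⟩, Finset.mem_filter.2 ⟨@Finset.mem_univ _ this _, hf⟩, rfl⟩
  have hAcard : ∀ v : G.V,
      (A v).card = ((Finset.univ.filter fun f : G.E => v ∈ G.inc f).erase e).card := by
    intro v
    rw [← hAimage v]; exact (Finset.card_image_of_injective (A v) Subtype.val_injective).symm
  have hAcard_notmem : ∀ v : G.V, v ∉ G.inc e → (A v).card = s := by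
    intro v hv
    rw [hAcard, Finset.erase_eq_of_notMem (by simp [hv]), hdeg]
  have hAcard_u : (A u).card = s - 1 := by
    rw [hAcard, Finset.card_erase_of_mem (by simp [hu]), hdeg]
  -- colors at a vertex are distinct
  have hinj : ∀ v : G.V, Set.InjOn c (A v) := by
    intro v f hf g hg hfg
    by_contra hne
    simp only [hA, Finset.coe_filter, Set.mem_setOf_eq] at hf hg
    exact hc f g hne ⟨v, hf.2, hg.2⟩ hfg
  have hcolors : ∀ v : G.V, ((A v).image c).card = (A v).card := fun v =>
    Finset.card_image_of_injOn (hinj v)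
  -- every color appears at every vertex not on e
  have hfull : ∀ v : G.V, v ∉ G.inc e → ∀ i : Fin s,
      ∃ f : (G.deleteEdges {e}).E, c f = i ∧ v ∈ G.inc f.1 := by
    intro v hv i
    have hcv : (A v).image c = Finset.univ := by
      apply Finset.eq_univ_of_card
      rw [hcolors, hAcard_notmem v hv, Fintype.card_fin]
    have : i ∈ (A v).image c := hcv ▸ Finset.mem_univ i
    obtain ⟨f, hf, hfi⟩ := Finset.mem_image.1 this
    simp only [hA, Finset.mem_filter] at hf
    exact ⟨f, hfi, hf.2⟩
  -- parity: for each color, the set of vertices missing that color is even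
  have hQeven : ∀ i : Fin s,
      Even (Finset.univ.filter fun v : G.V =>
        ¬ ∃ f : (G.deleteEdges {e}).E, c f = i ∧ v ∈ G.inc f.1).card := by
    intro i
    set P : Finset G.V := Finset.univ.filter fun v : G.V =>
      ∃ f : (G.deleteEdges {e}).E, c f = i ∧ v ∈ G.inc f.1 with hPdef
    set M : Finset (G.deleteEdges {e}).E := Finset.univ.filter fun f => c f = i with hM
    have hPbi : P = M.biUnion fun f => Finset.univ.filter (· ∈ G.inc f.1) := by
      ext v
      simp only [hPdef, hM, Finset.mem_filter, Finset.mem_univ, true_and, Finset.mem_biUnion]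
    have hdisj : ∀ f ∈ M, ∀ g ∈ M, f ≠ g →
        Disjoint (Finset.univ.filter (· ∈ G.inc f.1)) (Finset.univ.filter (· ∈ G.inc g.1)) := by
      intro f hf g hg hfg
      rw [Finset.disjoint_left]
      intro v hvf hvg
      simp only [Finset.mem_filter, Finset.mem_univ, true_and] at hvf hvg
      simp only [hM, Finset.mem_filter, Finset.mem_univ, true_and] at hf hg
      exact hc f g hfg ⟨v, hvf, hvg⟩ (hf.trans hg.symm)
    have hend : ∀ f : (G.deleteEdges {e}).E,
        (Finset.univ.filter (· ∈ G.inc f.1)).card = 2 := by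
      intro f
      obtain ⟨⟨a, b⟩, hab'⟩ := Quot.exists_rep (G.inc f.1)
      have hab : G.inc f.1 = s(a, b) := hab'.symm
      have hne : a ≠ b := fun h => hG f.1 (by rw [hab, h]; exact Sym2.mk_isDiag_iff.2 rfl)
      have : Finset.univ.filter (· ∈ G.inc f.1) = {a, b} := by
        ext v
        simp [hab, Sym2.mem_iff]
      rw [this, Finset.card_insert_of_notMem (by simp [hne]), Finset.card_singleton]
    have hPcard : P.card = 2 * M.card := by
      rw [hPbi, Finset.card_biUnion hdisj]
      simp only [hend]
      rw [Finset.sum_const, smul_eq_mul, mul_comm]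
    have hPeven : Even P.card := ⟨M.card, by omega⟩
    have hVeven : Even (Finset.univ : Finset G.V).card := by
      rwa [Nat.card_eq_fintype_card, ← Finset.card_univ] at heven
    have hsplit := Finset.card_filter_add_card_filter_not
      (s := (Finset.univ : Finset G.V))
      (p := fun v : G.V => ∃ f : (G.deleteEdges {e}).E, c f = i ∧ v ∈ G.inc f.1)
    rw [← hPdef] at hsplit
    obtain ⟨p, hp⟩ := hPeven
    obtain ⟨q, hq⟩ := hVeven
    exact ⟨q - p, by omega⟩
  -- a color missing at u
  have hmissu : ∃ i : Fin s, i ∉ (A u).image c := by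
    by_contra h
    push_neg at h
    have : (Finset.univ : Finset (Fin s)) ⊆ (A u).image c := fun i _ => h i
    have hle := Finset.card_le_card this
    rw [hcolors, hAcard_u, Finset.card_univ, Fintype.card_fin] at hle
    omega
  obtain ⟨i₀, hi₀⟩ := hmissu
  have hmiss_u : ¬ ∃ f : (G.deleteEdges {e}).E, c f = i₀ ∧ u ∈ G.inc f.1 := by
    rintro ⟨f, hfi, hfu⟩
    exact hi₀ (Finset.mem_image.2 ⟨f, by simp [hA, hfu], hfi⟩)
  -- i₀ is also missing at w
  have hmiss_w : ¬ ∃ f : (G.deleteEdges {e}).E, c f = i₀ ∧ w ∈ G.inc f.1 := by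
    set Q : Finset G.V := Finset.univ.filter fun v : G.V =>
      ¬ ∃ f : (G.deleteEdges {e}).E, c f = i₀ ∧ v ∈ G.inc f.1 with hQdef
    have hQsub : Q ⊆ {u, w} := by
      intro v hv
      simp only [hQdef, Finset.mem_filter, Finset.mem_univ, true_and] at hv
      by_contra hvuw
      have hvnot : v ∉ G.inc e := by
        rw [he]
        simp only [Sym2.mem_iff]
        intro hor
        apply hvuw
        rcases hor with rfl | rfl <;> simp
      exact hv (hfull v hvnot i₀)
    have huQ : u ∈ Q := by
      simp only [hQdef, Finset.mem_filter, Finset.mem_univ, true_and]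
      exact hmiss_u
    have hQcard_le : Q.card ≤ 2 := le_trans (Finset.card_le_card hQsub)
      (by rw [Finset.card_insert_of_notMem (by simp [huw]), Finset.card_singleton])
    have hQpos : 0 < Q.card := Finset.card_pos.2 ⟨u, huQ⟩
    have hQev := hQeven i₀
    rw [← hQdef] at hQev
    have hQ2 : Q.card = 2 := by
      obtain ⟨q, hq⟩ := hQev
      omega
    have hQeq : Q = {u, w} := Finset.eq_of_subset_of_card_le hQsub
      (by rw [Finset.card_insert_of_notMem (by simp [huw]), Finset.card_singleton, hQ2])
    have hwQ : w ∈ Q := hQeq ▸ (by simp : w ∈ ({u, w} : Finset G.V))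
    simpa only [hQdef, Finset.mem_filter, Finset.mem_univ, true_and] using hwQ
  -- build a proper s-edge-coloring of all of G
  obtain ⟨c₀, hc₀e, hc₀ne⟩ : ∃ c₀ : G.E → Fin s, c₀ e = i₀ ∧
      ∀ (f : G.E) (h : f ≠ e), c₀ f = c ⟨f, h⟩ :=
    ⟨fun f => if h : f = e then i₀ else c ⟨f, h⟩, by simp, fun f h => dif_neg h⟩
  have hc₀proper : G.IsProperEdgeColoring c₀ := by
    intro f g hfg hshare
    obtain ⟨v, hvf, hvg⟩ := hshare
    by_cases hf : f = e
    · have hge : g ≠ e := fun h => hfg (hf.trans h.symm)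
      have hvuw : v = u ∨ v = w := by
        rw [hf, he] at hvf
        simpa [Sym2.mem_iff] using hvf
      have hmiss_v : ¬ ∃ f' : (G.deleteEdges {e}).E, c f' = i₀ ∧ v ∈ G.inc f'.1 := by
        rcases hvuw with rfl | rfl
        · exact hmiss_u
        · exact hmiss_w
      rw [hf, hc₀e, hc₀ne g hge]
      intro hEq
      exact hmiss_v ⟨⟨g, hge⟩, hEq.symm, hvg⟩
    · by_cases hg : g = e
      · have hvuw : v = u ∨ v = w := by
          rw [hg, he] at hvg
          simpa [Sym2.mem_iff] using hvg
        have hmiss_v : ¬ ∃ f' : (G.deleteEdges {e}).E, c f' = i₀ ∧ v ∈ G.inc f'.1 := by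
          rcases hvuw with rfl | rfl
          · exact hmiss_u
          · exact hmiss_w
        rw [hg, hc₀e, hc₀ne f hf]
        intro hEq
        exact hmiss_v ⟨⟨f, hf⟩, hEq, hvf⟩
      · rw [hc₀ne f hf, hc₀ne g hg]
        refine hc ⟨f, hf⟩ ⟨g, hg⟩ ?_ ⟨v, hvf, hvg⟩
        intro h
        exact hfg (congrArg Subtype.val h)
  -- hence 0 ∈ T, contradiction
  have h0T : (0 : ℕ) ∈ T := by
    refine ⟨∅, by simp, ⟨fun f => c₀ f.1, ?_⟩⟩
    intro f g hfg hshare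
    refine hc₀proper f.1 g.1 (fun h => hfg (Subtype.ext h)) ?_
    exact hshare
  have := Nat.sInf_le h0T
  omega
end

section
/- For i = 1, ..., n let G_i be s-graphs with chosen edges e_i = v_iw_i ∈ E(G_i), and let G = ∑_{i=1}^n G_i be the graph obtained from the disjoint union of the graphs G_i − e_i by adding, for n = 2k, the edges v_{2j}v_{2j+1} and w_{2j+1}w_{2j+2} for 0 ≤ j ≤ k−1 with indices modulo 2k (and for an odd number of summands the analogous connecting edges together with the closing edge as in the cyclic construction). Then G is an s-graph. -/
/-- The connecting edges of the sum construction `∑ Gᵢ` on `m` summands (indexed by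
`Fin m`): listing the distinguished endpoints as `v₀, w₀, …, v_{m-1}, w_{m-1}`, the
`t`-th new edge is `v_t v_{t+1}` for even `t < m - 1`, `w_t w_{(t+1) mod m}` for odd
`t`, and (when `m` is odd, so that `t = m - 1` is even) the closing edge is
`v_{m-1} w₀`. This is exactly the cyclic pattern
`v₀v₁, w₁w₂, v₂v₃, w₃w₄, …` of the sum construction. -/
def sumConnector (m : ℕ) (hm : 0 < m) (Gs : Fin m → Mgraph)
    (vs ws : ∀ i : Fin m, (Gs i).V) (t : Fin m) : Sym2 (Σ i : Fin m, (Gs i).V) :=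
  if h : t.val + 1 < m then
    if t.val % 2 = 0 then
      s(⟨t, vs t⟩, ⟨⟨t.val + 1, h⟩, vs ⟨t.val + 1, h⟩⟩)
    else
      s(⟨t, ws t⟩, ⟨⟨t.val + 1, h⟩, ws ⟨t.val + 1, h⟩⟩)
  else
    if t.val % 2 = 0 then
      s(⟨t, vs t⟩, ⟨⟨0, hm⟩, ws ⟨0, hm⟩⟩)
    else
      s(⟨t, ws t⟩, ⟨⟨0, hm⟩, ws ⟨0, hm⟩⟩)

/-- The sum `∑ Gᵢ` of the multigraphs `Gᵢ` with distinguished edges `eᵢ = vᵢwᵢ`: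
delete each `eᵢ` and connect the resulting deficient vertices cyclically by the
new edges `v₀v₁, w₁w₂, v₂v₃, w₃w₄, …` (with the closing edge `v_{m-1}w₀` when the
number of summands is odd). -/
def sumGraph (m : ℕ) (hm : 0 < m) (Gs : Fin m → Mgraph) (es : ∀ i : Fin m, (Gs i).E)
    (vs ws : ∀ i : Fin m, (Gs i).V) : Mgraph where
  V := Σ i : Fin m, (Gs i).V
  E := (Σ i : Fin m, {e : (Gs i).E // e ≠ es i}) ⊕ Fin m
  inc := Sum.elim
    (fun p => ((Gs p.1).inc p.2.1).map (Sigma.mk p.1))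
    (sumConnector m hm Gs vs ws)


section Aux

lemma nat_card_sigma {ι : Type*} [Fintype ι] (f : ι → Type*) [∀ i, Finite (f i)] :
    Nat.card (Σ i, f i) = ∑ i, Nat.card (f i) := by
  letI : ∀ i, Fintype (f i) := fun i => Fintype.ofFinite _
  simp [Nat.card_eq_fintype_card, Fintype.card_sigma]

open Finset in
lemma Mgraph.handshake (G : Mgraph) (hl : G.Loopless) {s : ℕ} (hr : G.Regular s)
    (X : Set G.V) : Even (s * Nat.card X + Nat.card (G.edgeBoundary X)) := by
  classical
  letI : Fintype G.V := Fintype.ofFinite _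
  letI : Fintype G.E := Fintype.ofFinite _
  set P := {p : G.E × G.V // p.2 ∈ X ∧ p.2 ∈ G.inc p.1} with hP
  have e1 : P ≃ Σ v : X, {e : G.E // ↑v ∈ G.inc e} :=
    { toFun := fun p => ⟨⟨p.1.2, p.2.1⟩, ⟨p.1.1, p.2.2⟩⟩
      invFun := fun q => ⟨(q.2.1, q.1.1), q.1.2, q.2.2⟩
      left_inv := fun p => rfl
      right_inv := fun q => rfl }
  have e2 : P ≃ Σ e : G.E, {v : G.V // v ∈ X ∧ v ∈ G.inc e} :=
    { toFun := fun p => ⟨p.1.1, ⟨p.1.2, p.2⟩⟩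
      invFun := fun q => ⟨(q.1, q.2.1), q.2.2⟩
      left_inv := fun p => rfl
      right_inv := fun q => rfl }
  have h1 : Nat.card P = s * Nat.card X := by
    rw [Nat.card_congr e1, nat_card_sigma]
    have : ∀ v : X, Nat.card {e : G.E // ↑v ∈ G.inc e} = s := fun v => hr v
    simp only [← Nat.card_eq_fintype_card, this, Finset.sum_const, Finset.card_univ,
      smul_eq_mul, Nat.card_eq_fintype_card]
    ring
  have h2 : Nat.card P = ∑ e : G.E, Nat.card {v : G.V // v ∈ X ∧ v ∈ G.inc e} := by
    rw [Nat.card_congr e2, nat_card_sigma]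
  have key : ∀ e : G.E, Nat.card {v : G.V // v ∈ X ∧ v ∈ G.inc e} % 2
      = (if e ∈ G.edgeBoundary X then 1 else 0) := by
    intro e
    obtain ⟨⟨a, b⟩, he'⟩ := (G.inc e).exists_rep
    have he : G.inc e = s(a, b) := he'.symm
    have hne : a ≠ b := by
      intro h; exact hl e (by rw [he, h, Sym2.mk_isDiag_iff])
    have hb : e ∈ G.edgeBoundary X ↔ ((a ∈ X ∧ b ∉ X) ∨ (b ∈ X ∧ a ∉ X)) := by
      simp only [Mgraph.edgeBoundary, Set.mem_setOf_eq, he, Sym2.mem_iff]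
      constructor
      · rintro ⟨u, (rfl | rfl), w, (rfl | rfl), hu, hw⟩ <;> tauto
      · rintro (⟨h1, h2⟩ | ⟨h1, h2⟩)
        · exact ⟨a, Or.inl rfl, b, Or.inr rfl, h1, h2⟩
        · exact ⟨b, Or.inr rfl, a, Or.inl rfl, h1, h2⟩
    have hset : {v : G.V | v ∈ X ∧ v ∈ G.inc e} = X ∩ {a, b} := by
      ext v; simp [he, Set.mem_insert_iff, and_comm]
    have hcard : Nat.card {v : G.V // v ∈ X ∧ v ∈ G.inc e}
        = (X ∩ {a, b} : Set G.V).ncard := by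
      rw [← Nat.card_coe_set_eq, ← hset]; rfl
    rw [hcard]
    by_cases ha : a ∈ X <;> by_cases hbX : b ∈ X
    · have : X ∩ {a, b} = {a, b} := by
        apply Set.inter_eq_right.mpr; intro v hv
        rcases hv with rfl | rfl; exacts [ha, hbX]
      rw [this, Set.ncard_pair hne]
      simp [hb, ha, hbX]
    · have : X ∩ {a, b} = {a} := by
        ext v
        simp only [Set.mem_inter_iff, Set.mem_insert_iff, Set.mem_singleton_iff]
        constructor
        · rintro ⟨h1, h2 | h2⟩ <;> subst h2
          · rfl
          · exact absurd h1 hbX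
        · rintro rfl; exact ⟨ha, Or.inl rfl⟩
      rw [this, Set.ncard_singleton]
      simp [hb, ha, hbX]
    · have : X ∩ {a, b} = {b} := by
        ext v
        simp only [Set.mem_inter_iff, Set.mem_insert_iff, Set.mem_singleton_iff]
        constructor
        · rintro ⟨h1, h2 | h2⟩ <;> subst h2
          · exact absurd h1 ha
          · rfl
        · rintro rfl; exact ⟨hbX, Or.inr rfl⟩
      rw [this, Set.ncard_singleton]
      simp [hb, ha, hbX]
    · have : X ∩ {a, b} = ∅ := by
        ext v
        simp only [Set.mem_inter_iff, Set.mem_insert_iff, Set.mem_singleton_iff,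
          Set.mem_empty_iff_false, iff_false]
        rintro ⟨h1, h2 | h2⟩ <;> subst h2
        exacts [ha h1, hbX h1]
      rw [this, Set.ncard_empty]
      simp [hb, ha, hbX]
  have hbd : Nat.card (G.edgeBoundary X)
      = ∑ e : G.E, (if e ∈ G.edgeBoundary X then 1 else 0) := by
    rw [Nat.card_eq_fintype_card, Fintype.card_subtype, Finset.card_filter]
  have hm2 : Nat.card P % 2 = Nat.card (G.edgeBoundary X) % 2 := by
    rw [h2, hbd, Finset.sum_nat_mod]
    conv_rhs => rw [Finset.sum_nat_mod]
    congr 1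
    apply Finset.sum_congr rfl
    intro e _
    rw [key e]
    split_ifs <;> rfl
  rw [Nat.even_iff]
  omega

end Aux

section Conn

variable {m : ℕ} (hm : 0 < m) (Gs : Fin m → Mgraph) (vs ws : ∀ i : Fin m, (Gs i).V)

/-- First endpoint of the `t`-th connector edge. -/
def connA (t : Fin m) : Σ i : Fin m, (Gs i).V :=
  ⟨t, if t.val % 2 = 0 then vs t else ws t⟩

/-- Second endpoint of the `t`-th connector edge. -/
def connB (t : Fin m) : Σ i : Fin m, (Gs i).V :=
  if h : t.val + 1 < m then
    ⟨⟨t.val + 1, h⟩, if t.val % 2 = 0 then vs ⟨t.val + 1, h⟩ else ws ⟨t.val + 1, h⟩⟩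
  else ⟨⟨0, hm⟩, ws ⟨0, hm⟩⟩

lemma sumConnector_eq (t : Fin m) :
    sumConnector m hm Gs vs ws t = s(connA Gs vs ws t, connB hm Gs vs ws t) := by
  unfold sumConnector connA connB
  split_ifs <;> rfl

lemma connA_injective : Function.Injective (connA Gs vs ws) := by
  intro a b h
  exact congrArg Sigma.fst h

lemma connA_fst (t : Fin m) : (connA Gs vs ws t).fst = t := rfl

lemma connB_fst (t : Fin m) :
    (connB hm Gs vs ws t).fst.val = if t.val + 1 < m then t.val + 1 else 0 := by
  unfold connB; split_ifs <;> rfl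

lemma connB_injective : Function.Injective (connB hm Gs vs ws) := by
  intro a b h
  have h1 := congrArg (fun p => (Sigma.fst p).val) h
  simp only [connB_fst] at h1
  have ha := a.isLt
  have hb := b.isLt
  apply Fin.ext
  split_ifs at h1 <;> omega

lemma connA_ne_connB (hvw : ∀ i, vs i ≠ ws i) (t : Fin m) :
    connA Gs vs ws t ≠ connB hm Gs vs ws t := by
  intro h
  have h1 := congrArg (fun p => (Sigma.fst p).val) h
  simp only [connA_fst, connB_fst] at h1
  split_ifs at h1 with hlt
  · omega
  · -- t.val = 0, so connB t = ⟨0, ws 0⟩ and t = ⟨0, hm⟩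
    have ht0 : t = (⟨0, hm⟩ : Fin m) := Fin.ext h1
    subst ht0
    unfold connA connB at h
    rw [dif_neg hlt] at h
    simp only [Nat.zero_mod, if_pos rfl] at h
    have := (Sigma.mk.inj_iff.mp h).2
    exact hvw _ (eq_of_heq this)

lemma connA_exists (i : Fin m) (x : (Gs i).V) :
    (∃ t, connA Gs vs ws t = ⟨i, x⟩) ↔
      ((i.val % 2 = 0 ∧ x = vs i) ∨ (i.val % 2 = 1 ∧ x = ws i)) := by
  constructor
  · rintro ⟨t, ht⟩
    unfold connA at ht
    obtain ⟨h1, h2⟩ := Sigma.mk.inj_iff.mp ht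
    subst h1
    have hx : x = if t.val % 2 = 0 then vs t else ws t := (eq_of_heq h2).symm
    by_cases hp : t.val % 2 = 0
    · left; exact ⟨hp, by rw [hx, if_pos hp]⟩
    · right; exact ⟨by omega, by rw [hx, if_neg hp]⟩
  · rintro (⟨h1, rfl⟩ | ⟨h1, rfl⟩)
    · exact ⟨i, by simp [connA, h1]⟩
    · have h2 : ¬ (i.val % 2 = 0) := by omega
      exact ⟨i, by simp [connA, h2]⟩

lemma connB_exists (i : Fin m) (x : (Gs i).V) :
    (∃ t, connB hm Gs vs ws t = ⟨i, x⟩) ↔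
      ((i.val % 2 = 1 ∧ x = vs i) ∨ (i.val % 2 = 0 ∧ x = ws i)) := by
  constructor
  · rintro ⟨t, ht⟩
    unfold connB at ht
    by_cases h : t.val + 1 < m
    · rw [dif_pos h] at ht
      by_cases hp : t.val % 2 = 0
      · rw [if_pos hp] at ht
        obtain ⟨h1, h2⟩ := Sigma.mk.inj_iff.mp ht
        subst h1
        exact Or.inl ⟨by show (t.val + 1) % 2 = 1; omega, (eq_of_heq h2).symm⟩
      · rw [if_neg hp] at ht
        obtain ⟨h1, h2⟩ := Sigma.mk.inj_iff.mp ht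
        subst h1
        exact Or.inr ⟨by show (t.val + 1) % 2 = 0; omega, (eq_of_heq h2).symm⟩
    · rw [dif_neg h] at ht
      obtain ⟨h1, h2⟩ := Sigma.mk.inj_iff.mp ht
      subst h1
      exact Or.inr ⟨by norm_num, (eq_of_heq h2).symm⟩
  · have him : i.val < m := i.isLt
    rintro (⟨h1, rfl⟩ | ⟨h1, rfl⟩)
    · -- i is odd, take t = i - 1
      have hlt : i.val - 1 < m := by omega
      refine ⟨⟨i.val - 1, hlt⟩, ?_⟩
      unfold connB
      have hlt2 : i.val - 1 + 1 < m := by omega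
      rw [dif_pos hlt2]
      have hp : (i.val - 1) % 2 = 0 := by omega
      rw [if_pos hp]
      have : (⟨i.val - 1 + 1, hlt2⟩ : Fin m) = i := Fin.ext (by simp; omega)
      rw [this]
    · by_cases h0 : i.val = 0
      · refine ⟨⟨m - 1, by omega⟩, ?_⟩
        unfold connB
        rw [dif_neg (by simp; omega)]
        have : (⟨0, hm⟩ : Fin m) = i := Fin.ext (by simp; omega)
        rw [this]
      · have hlt2 : i.val - 1 + 1 < m := by omega
        refine ⟨⟨i.val - 1, by omega⟩, ?_⟩
        unfold connB
        rw [dif_pos hlt2]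
        have hp : ¬ ((i.val - 1) % 2 = 0) := by omega
        rw [if_neg hp]
        have : (⟨i.val - 1 + 1, hlt2⟩ : Fin m) = i := Fin.ext (by simp; omega)
        rw [this]

open scoped Classical in
lemma ncard_fiber {α : Type*} {f : Fin m → α} (hf : Function.Injective f) (P : α) :
    Nat.card {t : Fin m // f t = P} = if ∃ t, f t = P then 1 else 0 := by
  split_ifs with h
  · obtain ⟨t0, ht0⟩ := h
    rw [Nat.card_eq_one_iff_unique]
    exact ⟨⟨fun a b => Subtype.ext (hf (a.2.trans b.2.symm))⟩, ⟨⟨t0, ht0⟩⟩⟩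
  · haveI : IsEmpty {t : Fin m // f t = P} := ⟨fun a => h ⟨a.1, a.2⟩⟩
    exact Nat.card_of_isEmpty

open scoped Classical in
lemma conn_count (hvw : ∀ j, vs j ≠ ws j) (i : Fin m) (x : (Gs i).V) :
    Nat.card {t : Fin m // (⟨i, x⟩ : Σ j : Fin m, (Gs j).V) ∈ sumConnector m hm Gs vs ws t}
      = (if x = vs i then 1 else 0) + (if x = ws i then 1 else 0) := by
  classical
  have hmem : ∀ t : Fin m, ((⟨i, x⟩ : Σ j : Fin m, (Gs j).V) ∈ sumConnector m hm Gs vs ws t)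
      ↔ (connA Gs vs ws t = ⟨i, x⟩ ∨ connB hm Gs vs ws t = ⟨i, x⟩) := by
    intro t
    rw [sumConnector_eq, Sym2.mem_iff]
    constructor
    · rintro (h | h); exacts [Or.inl h.symm, Or.inr h.symm]
    · rintro (h | h); exacts [Or.inl h.symm, Or.inr h.symm]
  rw [Nat.card_congr (Equiv.subtypeEquivRight hmem)]
  have hdisj : Disjoint (fun t => connA Gs vs ws t = (⟨i, x⟩ : Σ j : Fin m, (Gs j).V))
      (fun t => connB hm Gs vs ws t = (⟨i, x⟩ : Σ j : Fin m, (Gs j).V)) := by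
    rw [Pi.disjoint_iff]
    intro t
    rw [disjoint_iff]
    by_cases hA : connA Gs vs ws t = (⟨i, x⟩ : Σ j : Fin m, (Gs j).V)
    · have hB : ¬ connB hm Gs vs ws t = (⟨i, x⟩ : Σ j : Fin m, (Gs j).V) := by
        intro hB; exact connA_ne_connB hm Gs vs ws hvw t (hA.trans hB.symm)
      simp [hA, hB]
    · simp [hA]
  rw [Nat.card_congr (subtypeOrEquiv _ _ hdisj), Nat.card_sum,
    ncard_fiber (connA_injective Gs vs ws), ncard_fiber (connB_injective hm Gs vs ws)]
  simp only [connA_exists, connB_exists]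
  have hne1 := hvw i
  have hne2 := Ne.symm (hvw i)
  by_cases hx : x = vs i <;> by_cases hy : x = ws i
  · exact absurd (hx.symm.trans hy) (hvw i)
  · by_cases hp : i.val % 2 = 0
    · have hp' : ¬ (i.val % 2 = 1) := by omega
      simp [hx, hy, hp, hp', hne1, hne2]
    · have hp' : i.val % 2 = 1 := by omega
      simp [hx, hy, hp, hp', hne1, hne2]
  · by_cases hp : i.val % 2 = 0
    · have hp' : ¬ (i.val % 2 = 1) := by omega
      simp [hx, hy, hp, hp', hne1, hne2]
    · have hp' : i.val % 2 = 1 := by omega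
      simp [hx, hy, hp, hp', hne1, hne2]
  · simp [hx, hy]

end Conn

open Mgraph in
/-- If the `Gᵢ` are `s`-graphs with distinguished edges `eᵢ = vᵢwᵢ`, then the sum
`G = ∑ Gᵢ` is an `s`-graph. -/
theorem sumGraph_isSGraph (s : ℕ) (m : ℕ) (hm : 0 < m) (Gs : Fin m → Mgraph)
    (es : ∀ i : Fin m, (Gs i).E) (vs ws : ∀ i : Fin m, (Gs i).V)
    (hinc : ∀ i : Fin m, (Gs i).inc (es i) = s(vs i, ws i))
    (hS : ∀ i : Fin m, (Gs i).IsSGraph s) :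
    (sumGraph m hm Gs es vs ws).IsSGraph s := by
  classical
  have hvw : ∀ i, vs i ≠ ws i := by
    intro i h
    exact (hS i).1 (es i) (by rw [hinc i]; exact Sym2.mk_isDiag_iff.mpr h)
  -- Looplessness
  have hloop : (sumGraph m hm Gs es vs ws).Loopless := by
    rintro (⟨j, e, hne⟩ | t) hd
    · obtain ⟨⟨a, b⟩, he'⟩ := ((Gs j).inc e).exists_rep
      have hmap : (sumGraph m hm Gs es vs ws).inc (Sum.inl ⟨j, ⟨e, hne⟩⟩)
          = ((Gs j).inc e).map (Sigma.mk j) := rfl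
      rw [hmap, ← he', Sym2.map_pair_eq] at hd
      replace hd := Sym2.mk_isDiag_iff.mp hd
      have hab : a = b := eq_of_heq (Sigma.mk.inj_iff.mp hd).2
      exact (hS j).1 e (by rw [← he']; exact Sym2.mk_isDiag_iff.mpr hab)
    · have hmap : (sumGraph m hm Gs es vs ws).inc (Sum.inr t)
          = sumConnector m hm Gs vs ws t := rfl
      rw [hmap, sumConnector_eq] at hd
      replace hd := Sym2.mk_isDiag_iff.mp hd
      exact connA_ne_connB hm Gs vs ws hvw t hd
  -- Regularity
  have hreg : (sumGraph m hm Gs es vs ws).Regular s := by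
    rintro ⟨i, x⟩
    unfold Mgraph.degree
    refine Eq.trans (Nat.card_congr (Equiv.subtypeSum
      (p := fun e => (⟨i, x⟩ : Σ j : Fin m, (Gs j).V) ∈ (sumGraph m hm Gs es vs ws).inc e)))
      (Eq.trans Nat.card_sum ?_)
    have hc2 : Nat.card {t : Fin m //
        (⟨i, x⟩ : Σ j : Fin m, (Gs j).V) ∈ (sumGraph m hm Gs es vs ws).inc (Sum.inr t)}
        = (if x = vs i then 1 else 0) + (if x = ws i then 1 else 0) :=
      conn_count hm Gs vs ws hvw i x
    have hc1 : Nat.card {p : Σ j : Fin m, {e : (Gs j).E // e ≠ es j} //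
        (⟨i, x⟩ : Σ j : Fin m, (Gs j).V) ∈ (sumGraph m hm Gs es vs ws).inc (Sum.inl p)}
        = Nat.card {e : (Gs i).E // e ≠ es i ∧ x ∈ (Gs i).inc e} := by
      symm
      apply Nat.card_congr
      apply Equiv.ofBijective
        (f := fun q => ⟨⟨i, ⟨q.1, q.2.1⟩⟩, Sym2.mem_map.mpr ⟨x, q.2.2, rfl⟩⟩)
      constructor
      · intro q q' h
        have h1 := congrArg Subtype.val h
        have h2 := (Sigma.mk.inj_iff.mp h1).2
        have h3 : (⟨q.1, q.2.1⟩ : {e : (Gs i).E // e ≠ es i}) = ⟨q'.1, q'.2.1⟩ := eq_of_heq h2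
        have h4 := congrArg (Subtype.val (p := fun e => e ≠ es i)) h3
        exact Subtype.ext h4
      · rintro ⟨⟨j, e, hne⟩, hmem⟩
        have hmem' : (⟨i, x⟩ : Σ j : Fin m, (Gs j).V) ∈ ((Gs j).inc e).map (Sigma.mk j) := hmem
        rw [Sym2.mem_map] at hmem'
        obtain ⟨y, hy, hEq⟩ := hmem'
        obtain ⟨h1, h2⟩ := Sigma.mk.inj_iff.mp hEq
        subst h1
        have hyx : y = x := eq_of_heq h2
        subst hyx
        exact ⟨⟨e, hne, hy⟩, Subtype.ext rfl⟩
    rw [hc1, hc2]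
    have hSdeg : Nat.card {e : (Gs i).E // x ∈ (Gs i).inc e} = s := (hS i).2.1 x
    have hsub : Nat.card {e : (Gs i).E // e ≠ es i ∧ x ∈ (Gs i).inc e}
        = ({e : (Gs i).E | x ∈ (Gs i).inc e} \ {es i}).ncard := by
      rw [← Nat.card_coe_set_eq]
      apply Nat.card_congr
      apply Equiv.subtypeEquivRight
      intro e
      simp only [Set.mem_diff, Set.mem_setOf_eq, Set.mem_singleton_iff]
      tauto
    have hScard : ({e : (Gs i).E | x ∈ (Gs i).inc e}).ncard = s := by
      rw [← Nat.card_coe_set_eq]; exact hSdeg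
    by_cases hx : x = vs i ∨ x = ws i
    · have hes : es i ∈ {e : (Gs i).E | x ∈ (Gs i).inc e} := by
        rw [Set.mem_setOf_eq, hinc i, Sym2.mem_iff]; exact hx
      have hspos : 1 ≤ s := by
        rw [← hScard]
        exact (Set.ncard_pos (Set.toFinite _)).mpr ⟨es i, hes⟩
      have hd : ({e : (Gs i).E | x ∈ (Gs i).inc e} \ {es i}).ncard = s - 1 := by
        rw [Set.ncard_diff_singleton_of_mem hes, hScard]
      rw [hsub, hd]
      rcases hx with hx | hx
      · have hx' : ¬ x = ws i := fun h => hvw i ((hx.symm.trans h))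
        rw [if_pos hx, if_neg hx']
        omega
      · have hx' : ¬ x = vs i := fun h => Ne.symm (hvw i) ((hx.symm.trans h))
        rw [if_neg hx', if_pos hx]
        omega
    · push_neg at hx
      have hes : es i ∉ {e : (Gs i).E | x ∈ (Gs i).inc e} := by
        rw [Set.mem_setOf_eq, hinc i, Sym2.mem_iff]
        rintro (h | h); exacts [hx.1 h, hx.2 h]
      have hd : {e : (Gs i).E | x ∈ (Gs i).inc e} \ {es i}
          = {e : (Gs i).E | x ∈ (Gs i).inc e} := Set.diff_singleton_eq_self hes
      rw [hsub, hd, hScard]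
      simp [hx.1, hx.2]
  refine ⟨hloop, hreg, ?_⟩
  -- boundary condition
  intro X hodd
  set Xi : ∀ j : Fin m, Set (Gs j).V := fun j => {y | (⟨j, y⟩ : Σ j : Fin m, (Gs j).V) ∈ X}
    with hXi
  have ecard : Nat.card X = ∑ j : Fin m, Nat.card (Xi j) := by
    rw [← nat_card_sigma]
    exact Nat.card_congr
      { toFun := fun p => ⟨p.1.1, ⟨p.1.2, p.2⟩⟩
        invFun := fun q => ⟨⟨q.1, q.2.1⟩, q.2.2⟩
        left_inv := fun p => rfl
        right_inv := fun q => rfl }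
  have hex : ∃ i, Odd (Nat.card (Xi i)) := by
    by_contra hcon
    push_neg at hcon
    simp only [Nat.not_odd_iff_even] at hcon
    rw [ecard, Nat.odd_iff, Finset.sum_nat_mod] at hodd
    have hz : ∀ j ∈ Finset.univ, Nat.card (Xi j) % 2 = 0 :=
      fun j _ => Nat.even_iff.mp (hcon j)
    rw [Finset.sum_congr rfl hz] at hodd
    simp at hodd
  obtain ⟨i, hoddi⟩ := hex
  have hb := (hS i).2.2 (Xi i) hoddi
  set D := (Gs i).edgeBoundary (Xi i) \ {es i} with hD
  have hDcard : s - 1 ≤ D.ncard := by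
    have h1 : (Gs i).edgeBoundary (Xi i) ⊆ D ∪ {es i} := by
      intro e he
      by_cases h : e = es i
      · exact Or.inr (by simp [h])
      · exact Or.inl ⟨he, by simp [h]⟩
    have h2 := Set.ncard_le_ncard h1 (Set.toFinite _)
    have h3 := Set.ncard_union_le D ({es i} : Set (Gs i).E)
    have h4 : ((Gs i).edgeBoundary (Xi i)).ncard = Nat.card ((Gs i).edgeBoundary (Xi i)) :=
      (Nat.card_coe_set_eq _).symm
    have h5 : ({es i} : Set (Gs i).E).ncard = 1 := Set.ncard_singleton _
    omega
  have hinj : D.ncard ≤ Nat.card ((sumGraph m hm Gs es vs ws).edgeBoundary X) := by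
    rw [← Nat.card_coe_set_eq]
    have hfm : ∀ e : D, (Sum.inl ⟨i, ⟨e.1, fun h => e.2.2 (by simp [h])⟩⟩ :
        (sumGraph m hm Gs es vs ws).E) ∈ (sumGraph m hm Gs es vs ws).edgeBoundary X := by
      rintro ⟨e, heD⟩
      obtain ⟨u, hu, w, hw, hux, hwx⟩ := heD.1
      exact ⟨⟨i, u⟩, Sym2.mem_map.mpr ⟨u, hu, rfl⟩,
        ⟨i, w⟩, Sym2.mem_map.mpr ⟨w, hw, rfl⟩, hux, hwx⟩
    apply Nat.card_le_card_of_injective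
      (f := fun e : D => (⟨_, hfm e⟩ : ((sumGraph m hm Gs es vs ws).edgeBoundary X)))
    intro a b h
    have h1 := congrArg Subtype.val h
    have h1' : (Sum.inl ⟨i, ⟨a.1, fun h => a.2.2 (by simp [h])⟩⟩ :
        (Σ j : Fin m, {e : (Gs j).E // e ≠ es j}) ⊕ Fin m)
        = Sum.inl ⟨i, ⟨b.1, fun h => b.2.2 (by simp [h])⟩⟩ := h1
    have h2 := (Sigma.mk.inj_iff.mp (Sum.inl.inj h1')).2
    have h3 : (⟨a.1, fun h => a.2.2 (by simp [h])⟩ : {e : (Gs i).E // e ≠ es i})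
        = ⟨b.1, fun h => b.2.2 (by simp [h])⟩ := eq_of_heq h2
    have h4 := congrArg (Subtype.val (p := fun e => e ≠ es i)) h3
    exact Subtype.ext h4
  have hhs := Mgraph.handshake (sumGraph m hm Gs es vs ws) hloop hreg X
  obtain ⟨k, hk⟩ := hodd
  have hmul : s * Nat.card X = 2 * (s * k) + s := by rw [hk]; ring
  obtain ⟨r, hr⟩ := hhs
  rw [hmul] at hr
  have hfin : s ≤ Nat.card ((sumGraph m hm Gs es vs ws).edgeBoundary X) := by
    generalize hq : s * k = q at hr
    omega
  exact hfin
end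

section
/- For every finite loopless multigraph G, r(G) ≤ r_v(G)·⌊Δ(G)/2⌋ and r(G) ≤ r'_v(G)·⌊Δ(G)/2⌋. -/
namespace MgraphAux
open SimpleGraph



lemma sym2_eq_of_ne {α : Type*} {z : Sym2 α} {a b : α} (ha : a ∈ z) (hb : b ∈ z)
    (hab : a ≠ b) : z = s(a, b) := by
  induction z using Sym2.inductionOn with
  | hf x y =>
    rw [Sym2.mem_iff] at ha hb
    rcases ha with rfl | rfl <;> rcases hb with rfl | rfl
    · exact absurd rfl hab
    · rfl
    · exact Sym2.eq_swap
    · exact absurd rfl hab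

lemma exists_mem_sym2 {α : Type*} (z : Sym2 α) : ∃ a, a ∈ z := by
  induction z using Sym2.inductionOn with
  | hf x y => exact ⟨x, Sym2.mem_mk_left x y⟩




variable {V : Type*} {G : SimpleGraph V}

/-- In a graph of max degree ≤ 2, paths from a vertex whose "previous" vertex is
forbidden have nested supports. -/
lemma nested_supports
    (hdeg : ∀ w a b c : V, G.Adj w a → G.Adj w b → G.Adj w c → a = b ∨ a = c ∨ b = c)
    {x y : V} : ∀ {a : V} (p : G.Walk a x) (q : G.Walk a y) {z : V},
    p.IsPath → q.IsPath → G.Adj a z → z ∉ p.support → z ∉ q.support →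
    p.support ⊆ q.support ∨ q.support ⊆ p.support := by
  intro a p
  induction p with
  | nil =>
    intro q z _ _ _ _ _
    left
    intro w hw
    simp only [Walk.support_nil, List.mem_singleton] at hw
    subst hw
    exact q.start_mem_support
  | @cons a b x hab p' ih =>
    intro q z hp hq haz hzp hzq
    cases q with
    | nil =>
      right
      intro w hw
      simp only [Walk.support_nil, List.mem_singleton] at hw
      subst hw
      exact (Walk.cons hab p').start_mem_support
    | @cons _ c _ hac q' =>
      have hb : b ∈ (Walk.cons hab p').support := by
        rw [Walk.support_cons]; exact List.mem_cons_of_mem _ p'.start_mem_support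
      have hc : c ∈ (Walk.cons hac q').support := by
        rw [Walk.support_cons]; exact List.mem_cons_of_mem _ q'.start_mem_support
      have hbz : b ≠ z := fun h => hzp (h ▸ hb)
      have hcz : c ≠ z := fun h => hzq (h ▸ hc)
      have hbc : b = c := by
        rcases hdeg a b c z hab hac haz with h | h | h
        · exact h
        · exact absurd h hbz
        · exact absurd h hcz
      subst hbc
      rw [Walk.cons_isPath_iff] at hp hq
      have := ih q' hp.1 hq.1 hab.symm hp.2 hq.2
      rw [Walk.support_cons, Walk.support_cons]
      rcases this with h | h
      · exact Or.inl (List.cons_subset_cons a h)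
      · exact Or.inr (List.cons_subset_cons a h)

/-- An interior vertex of a path has two distinct neighbors. -/
lemma interior_two_neighbors {x y v : V} (q : G.Walk x y) (hq : q.IsPath)
    (hv : v ∈ q.support) (h1 : v ≠ x) (h2 : v ≠ y) :
    ∃ a b, a ≠ b ∧ G.Adj v a ∧ G.Adj v b := by
  induction q with
  | nil =>
    simp only [Walk.support_nil, List.mem_singleton] at hv
    exact absurd hv h1
  | @cons x z y hxz q' ih =>
    rw [Walk.support_cons, List.mem_cons] at hv
    rcases hv with rfl | hv
    · exact absurd rfl h1
    rw [Walk.cons_isPath_iff] at hq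
    by_cases hvz : v = z
    · subst hvz
      cases q' with
      | nil => exact absurd rfl h2
      | @cons _ w _ hvw q'' =>
        refine ⟨x, w, ?_, hxz.symm, hvw⟩
        intro hxw
        apply hq.2
        rw [Walk.support_cons]
        exact List.mem_cons_of_mem _ (hxw ▸ q''.start_mem_support)
    · exact ih hq.1 hv hvz h2

/-- A connected subgraph of a graph with maximum degree ≤ 2 contains at most two
vertices of degree ≤ 1. -/
lemma no_three_pendant
    (hdeg : ∀ w a b c : V, G.Adj w a → G.Adj w b → G.Adj w c → a = b ∨ a = c ∨ b = c)
    {u u' v : V}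
    (hu : ∀ a b, G.Adj u a → G.Adj u b → a = b)
    (hu' : ∀ a b, G.Adj u' a → G.Adj u' b → a = b)
    (hv : ∀ a b, G.Adj v a → G.Adj v b → a = b)
    (h1 : u ≠ u') (h2 : u ≠ v) (h3 : u' ≠ v)
    (r1 : G.Reachable u v) (r2 : G.Reachable u' v) : False := by
  classical
  obtain ⟨w0⟩ := r1.trans r2.symm
  obtain ⟨p0⟩ := r1
  set p := p0.bypass with hpdef
  have hp : p.IsPath := p0.bypass_isPath
  set W := w0.bypass with hWdef
  have hW : W.IsPath := w0.bypass_isPath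
  clear_value p W
  by_cases hvW : v ∈ W.support
  · obtain ⟨a, b, hab, ha, hb⟩ := interior_two_neighbors W hW hvW h2.symm h3.symm
    exact hab (hv a b ha hb)
  · cases p with
    | nil => exact h2 rfl
    | @cons _ b _ hub p' =>
      cases W with
      | nil => exact h1 rfl
      | @cons _ c _ huc W' =>
        have hbc : b = c := hu b c hub huc
        subst hbc
        rw [Walk.cons_isPath_iff] at hp hW
        rcases nested_supports hdeg p' W' hp.1 hW.1 hub.symm hp.2 hW.2 with h | h
        · apply hvW
          rw [Walk.support_cons]
          exact List.mem_cons_of_mem _ (h p'.end_mem_support)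
        · have hu'p : u' ∈ (Walk.cons hub p').support := by
            rw [Walk.support_cons]
            exact List.mem_cons_of_mem _ (h W'.end_mem_support)
          obtain ⟨a, b', hab, ha, hb⟩ :=
            interior_two_neighbors (Walk.cons hub p')
              ((Walk.cons_isPath_iff hub p').mpr hp) hu'p h1.symm h3
          exact hab (hu' a b' ha hb)

end MgraphAux


namespace Mgraph

attribute [local instance] Classical.propDecidable

variable {G : Mgraph} {D : ℕ}

/-- A partial proper edge coloring. -/
def PProper (G : Mgraph) {D : ℕ} (c : G.E → Option (Fin D)) : Prop :=
  ∀ e f : G.E, e ≠ f → (∃ w : G.V, w ∈ G.inc e ∧ w ∈ G.inc f) →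
    ∀ γ : Fin D, c e = some γ → c f ≠ some γ

/-- Colors appearing on edges at a vertex. -/
def colorsAt (G : Mgraph) {D : ℕ} (c : G.E → Option (Fin D)) (w : G.V) : Set (Fin D) :=
  {γ | ∃ e, w ∈ G.inc e ∧ c e = some γ}

/-- The edge set `e` touches a vertex set. -/
def Touch (G : Mgraph) (e : G.E) (R : Set G.V) : Prop := ∃ w ∈ G.inc e, w ∈ R

/-- `R` is closed under edges colored `α` or `β`. -/
def KClosed (G : Mgraph) {D : ℕ} (c : G.E → Option (Fin D)) (α β : Fin D)
    (R : Set G.V) : Prop :=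
  ∀ e : G.E, (c e = some α ∨ c e = some β) → G.Touch e R → ∀ w ∈ G.inc e, w ∈ R

/-- The Kempe swap of colors `α`, `β` on the region `R`. -/
noncomputable def swapC (G : Mgraph) {D : ℕ} (c : G.E → Option (Fin D)) (α β : Fin D)
    (R : Set G.V) : G.E → Option (Fin D) := fun e =>
  if (c e = some α ∨ c e = some β) ∧ G.Touch e R then
    (if c e = some α then some β else some α) else c e

lemma swapC_none_iff (c : G.E → Option (Fin D)) (α β : Fin D) (R : Set G.V) (e : G.E) :
    G.swapC c α β R e = none ↔ c e = none := by
  unfold swapC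
  split_ifs with h1 h2 <;> simp_all

lemma swapC_eq_of_ne (c : G.E → Option (Fin D)) {α β γ : Fin D} (R : Set G.V) (e : G.E)
    (hγα : γ ≠ α) (hγβ : γ ≠ β) : G.swapC c α β R e = some γ ↔ c e = some γ := by
  unfold swapC
  split_ifs with h1 h2 <;> simp_all
  · exact iff_of_false (fun h => hγβ h.symm) (fun h => hγα h.symm)
  · exact iff_of_false (fun h => hγα h.symm) (fun h => hγβ h.symm)

lemma swapC_eq_alpha {c : G.E → Option (Fin D)} {α β : Fin D} {R : Set G.V} {e : G.E}
    (hαβ : α ≠ β) (h : G.swapC c α β R e = some α) :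
    (c e = some α ∧ ¬ G.Touch e R) ∨ (c e = some β ∧ G.Touch e R) := by
  unfold swapC at h
  split_ifs at h with h1 h2
  · simp only [Option.some.injEq] at h; exact absurd h.symm hαβ
  · exact Or.inr ⟨h1.1.resolve_left h2, h1.2⟩
  · exact Or.inl ⟨h, fun ht => h1 ⟨Or.inl h, ht⟩⟩

lemma swapC_eq_beta {c : G.E → Option (Fin D)} {α β : Fin D} {R : Set G.V} {e : G.E}
    (hαβ : α ≠ β) (h : G.swapC c α β R e = some β) :
    (c e = some β ∧ ¬ G.Touch e R) ∨ (c e = some α ∧ G.Touch e R) := by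
  unfold swapC at h
  split_ifs at h with h1 h2
  · exact Or.inr ⟨h2, h1.2⟩
  · simp only [Option.some.injEq] at h
    exact absurd h hαβ
  · exact Or.inl ⟨h, fun ht => h1 ⟨Or.inr h, ht⟩⟩

lemma PProper.swapC {c : G.E → Option (Fin D)} {α β : Fin D} {R : Set G.V}
    (hc : G.PProper c) (hαβ : α ≠ β) (hR : G.KClosed c α β R) :
    G.PProper (G.swapC c α β R) := by
  intro e f hne hshare γ hce hcf
  obtain ⟨w, hwe, hwf⟩ := hshare
  have htrans : ∀ {e' f' : G.E}, (c e' = some α ∨ c e' = some β) → G.Touch e' R →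
      w ∈ G.inc e' → w ∈ G.inc f' → G.Touch f' R :=
    fun h1 h2 hw1 hw2 => ⟨w, hw2, hR _ h1 h2 w hw1⟩
  by_cases hγα : γ = α
  · subst hγα
    rcases swapC_eq_alpha hαβ hce with ⟨h1, h2⟩ | ⟨h1, h2⟩ <;>
      rcases swapC_eq_alpha hαβ hcf with ⟨h3, h4⟩ | ⟨h3, h4⟩
    · exact hc e f hne ⟨w, hwe, hwf⟩ _ h1 h3
    · exact h2 (htrans (Or.inr h3) h4 hwf hwe)
    · exact h4 (htrans (Or.inr h1) h2 hwe hwf)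
    · exact hc e f hne ⟨w, hwe, hwf⟩ _ h1 h3
  by_cases hγβ : γ = β
  · subst hγβ
    rcases swapC_eq_beta hαβ hce with ⟨h1, h2⟩ | ⟨h1, h2⟩ <;>
      rcases swapC_eq_beta hαβ hcf with ⟨h3, h4⟩ | ⟨h3, h4⟩
    · exact hc e f hne ⟨w, hwe, hwf⟩ _ h1 h3
    · exact h2 (htrans (Or.inl h3) h4 hwf hwe)
    · exact h4 (htrans (Or.inl h1) h2 hwe hwf)
    · exact hc e f hne ⟨w, hwe, hwf⟩ _ h1 h3
  · rw [swapC_eq_of_ne _ _ _ hγα hγβ] at hce hcf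
    exact hc e f hne ⟨w, hwe, hwf⟩ _ hce hcf

/-- Colors at a vertex outside the region are unchanged by the swap. -/
lemma colorsAt_swapC_notin {c : G.E → Option (Fin D)} {α β : Fin D} {R : Set G.V}
    (hR : G.KClosed c α β R) {x : G.V} (hx : x ∉ R) :
    G.colorsAt (G.swapC c α β R) x = G.colorsAt c x := by
  have key : ∀ e : G.E, x ∈ G.inc e → G.swapC c α β R e = c e := by
    intro e hxe
    unfold swapC
    split_ifs with h1 h2
    · exact absurd (hR e h1.1 h1.2 x hxe) hx
    · exact absurd (hR e h1.1 h1.2 x hxe) hx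
    · rfl
  unfold colorsAt
  ext γ
  constructor
  · rintro ⟨e, he, hce⟩; exact ⟨e, he, (key e he) ▸ hce⟩
  · rintro ⟨e, he, hce⟩; exact ⟨e, he, (key e he).symm ▸ hce⟩

/-- After the swap, `β` is free at a vertex of the region at which `α` was free. -/
lemma beta_free_swapC {c : G.E → Option (Fin D)} {α β : Fin D} {R : Set G.V}
    (hαβ : α ≠ β) {u : G.V} (hu : u ∈ R) (hα : α ∉ G.colorsAt c u) :
    β ∉ G.colorsAt (G.swapC c α β R) u := by
  rintro ⟨e, he, hce⟩
  rcases swapC_eq_beta hαβ hce with ⟨h1, h2⟩ | ⟨h1, h2⟩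
  · exact h2 ⟨u, he, hu⟩
  · exact hα ⟨e, he, h1⟩

end Mgraph

namespace Mgraph

open MgraphAux

variable {G : Mgraph} {D : ℕ}

lemma degree_eq_ncard (w : G.V) : G.degree w = {e | w ∈ G.inc e}.ncard := by
  rw [degree, ← Nat.card_coe_set_eq]
  rfl

lemma embedding_of_card_le {α β : Type*} [Finite α] [Finite β]
    (h : Nat.card α ≤ Nat.card β) : Nonempty (α ↪ β) :=
  ⟨((Finite.equivFin α).toEmbedding.trans ((Fin.castLEEmb h).trans
    (Finite.equivFin β).symm.toEmbedding))⟩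

lemma ncard_colorsAt_add_le (c : G.E → Option (Fin D)) (w : G.V) (U' : Set G.E)
    (hU' : ∀ e ∈ U', w ∈ G.inc e ∧ c e = none) :
    (G.colorsAt c w).ncard + U'.ncard ≤ G.degree w := by
  classical
  have h1 : (G.colorsAt c w).ncard ≤ {e | w ∈ G.inc e ∧ c e ≠ none}.ncard := by
    rw [← Nat.card_coe_set_eq, ← Nat.card_coe_set_eq]
    have : ∀ γ : ↥(G.colorsAt c w), ∃ e : G.E, w ∈ G.inc e ∧ c e = some γ.1 := fun γ => γ.2
    choose F hF1 hF2 using this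
    refine Nat.card_le_card_of_injective
      (fun γ => ⟨F γ, hF1 γ, by rw [hF2 γ]; exact fun h => nomatch h⟩) ?_
    intro γ1 γ2 h
    have : F γ1 = F γ2 := congrArg Subtype.val h
    have := (hF2 γ1).symm.trans (this ▸ hF2 γ2)
    exact Subtype.ext (Option.some_injective _ this)
  have h2 : {e | w ∈ G.inc e ∧ c e ≠ none}.ncard + U'.ncard ≤ G.degree w := by
    rw [degree_eq_ncard]
    rw [← Set.ncard_union_eq ?disj (Set.toFinite _) (Set.toFinite _)]
    case disj =>
      rw [Set.disjoint_left]
      rintro e ⟨-, hne⟩ heU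
      exact hne (hU' e heU).2
    refine Set.ncard_le_ncard ?_ (Set.toFinite _)
    rintro e (⟨he, -⟩ | he)
    · exact he
    · exact (hU' e he).1
  omega

lemma exists_notMem_of_ncard_lt {s : Set (Fin D)} (h : s.ncard < D) : ∃ γ, γ ∉ s := by
  by_contra hh
  push_neg at hh
  have : s = Set.univ := Set.eq_univ_iff_forall.mpr hh
  rw [this, Set.ncard_univ, Nat.card_eq_fintype_card, Fintype.card_fin] at h
  omega

lemma ncard_compl_colorsAt (s : Set (Fin D)) : sᶜ.ncard = D - s.ncard := by
  have := Set.ncard_add_ncard_compl s (Set.toFinite _) (Set.toFinite _)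
  rw [Nat.card_eq_fintype_card, Fintype.card_fin] at this
  omega

/-- Extending a partial proper coloring by coloring one edge with a color free at
all of its endpoints. -/
lemma color_step {c : G.E → Option (Fin D)} {A : Set G.E} (hc : G.PProper c) {e : G.E}
    (he : c e = none) (heA : e ∉ A) {γ : Fin D}
    (hγ : ∀ w ∈ G.inc e, γ ∉ G.colorsAt c w) :
    ∃ c' : G.E → Option (Fin D), G.PProper c' ∧ (∀ f, c' f = none → c f = none) ∧
      {f | c' f = none ∧ f ∉ A}.ncard < {f | c f = none ∧ f ∉ A}.ncard := by
  classical
  refine ⟨Function.update c e (some γ), ?_, ?_, ?_⟩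
  · intro f f' hne hshare δ hcf hcf'
    obtain ⟨w, hwf, hwf'⟩ := hshare
    by_cases hf : f = e
    · rw [hf, Function.update_self] at hcf
      obtain rfl : γ = δ := Option.some_injective _ hcf
      have hf'e : f' ≠ e := fun h => hne (hf.trans h.symm)
      rw [Function.update_of_ne hf'e] at hcf'
      exact hγ w (hf ▸ hwf) ⟨f', hwf', hcf'⟩
    · rw [Function.update_of_ne hf] at hcf
      by_cases hf' : f' = e
      · subst hf'
        rw [Function.update_self] at hcf'
        have : γ = δ := Option.some_injective _ hcf'
        exact hγ w hwf' ⟨f, hwf, this ▸ hcf⟩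
      · rw [Function.update_of_ne hf'] at hcf'
        exact hc f f' hne ⟨w, hwf, hwf'⟩ δ hcf hcf'
  · intro f hf
    by_cases hfe : f = e
    · subst hfe; rw [Function.update_self] at hf; exact nomatch hf
    · rwa [Function.update_of_ne hfe] at hf
  · have hset : {f | Function.update c e (some γ) f = none ∧ f ∉ A} =
        {f | c f = none ∧ f ∉ A} \ {e} := by
      ext f
      by_cases hfe : f = e
      · subst hfe
        simp [Function.update_self]
      · simp [Function.update_of_ne hfe, hfe]
    rw [hset]
    exact Set.ncard_diff_singleton_lt_of_mem ⟨he, heA⟩ (Set.toFinite _)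

lemma kclosed_reachable (c : G.E → Option (Fin D)) (α β : Fin D) (u0 : G.V) :
    G.KClosed c α β
      {w | (G.factorGraph {f | c f = some α ∨ c f = some β}).Reachable u0 w} := by
  rintro f hf ⟨w, hwf, hwR⟩ w' hw'f
  by_cases hww' : w' = w
  · exact hww' ▸ hwR
  · have hadj : (G.factorGraph {f | c f = some α ∨ c f = some β}).Adj w w' :=
      ⟨fun h => hww' h.symm, f, hf, sym2_eq_of_ne hwf hw'f fun h => hww' h.symm⟩
    exact hwR.trans hadj.reachable

lemma pendant_aux {c : G.E → Option (Fin D)} (hc : G.PProper c) {α β δ : Fin D} {x : G.V}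
    (hx : ∀ f, x ∈ G.inc f → (c f = some α ∨ c f = some β) → c f = some δ) :
    ∀ a b, (G.factorGraph {f | c f = some α ∨ c f = some β}).Adj x a →
      (G.factorGraph {f | c f = some α ∨ c f = some β}).Adj x b → a = b := by
  rintro a b ⟨hxa, f, hf, hfi⟩ ⟨hxb, g, hg, hgi⟩
  have hxf : x ∈ G.inc f := by rw [hfi]; exact Sym2.mem_mk_left x a
  have hxg : x ∈ G.inc g := by rw [hgi]; exact Sym2.mem_mk_left x b
  by_cases hfg : f = g
  · subst hfg
    exact Sym2.congr_right.mp (hfi.symm.trans hgi)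
  · exact absurd (hx g hxg hg) (hc f g hfg ⟨x, hxf, hxg⟩ δ (hx f hxf hf))

lemma maxdeg2_aux {c : G.E → Option (Fin D)} (hc : G.PProper c) (α β : Fin D) :
    ∀ w a b d : G.V, (G.factorGraph {f | c f = some α ∨ c f = some β}).Adj w a →
      (G.factorGraph {f | c f = some α ∨ c f = some β}).Adj w b →
      (G.factorGraph {f | c f = some α ∨ c f = some β}).Adj w d →
      a = b ∨ a = d ∨ b = d := by
  rintro w a b d ⟨hwa, f, hf, hfi⟩ ⟨hwb, g, hg, hgi⟩ ⟨hwd, k, hk, hki⟩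
  have hwf : w ∈ G.inc f := by rw [hfi]; exact Sym2.mem_mk_left w a
  have hwg : w ∈ G.inc g := by rw [hgi]; exact Sym2.mem_mk_left w b
  have hwk : w ∈ G.inc k := by rw [hki]; exact Sym2.mem_mk_left w d
  by_cases hfg : f = g
  · exact Or.inl (Sym2.congr_right.mp ((hfg ▸ hfi : G.inc g = s(w,a)).symm.trans hgi))
  by_cases hfk : f = k
  · exact Or.inr (Or.inl (Sym2.congr_right.mp ((hfk ▸ hfi : G.inc k = s(w,a)).symm.trans hki)))
  by_cases hgk : g = k
  · exact Or.inr (Or.inr (Sym2.congr_right.mp ((hgk ▸ hgi : G.inc k = s(w,b)).symm.trans hki)))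
  exfalso
  rcases hf with hf | hf <;> rcases hg with hg | hg <;> rcases hk with hk | hk
  · exact hc f g hfg ⟨w, hwf, hwg⟩ α hf hg
  · exact hc f g hfg ⟨w, hwf, hwg⟩ α hf hg
  · exact hc f k hfk ⟨w, hwf, hwk⟩ α hf hk
  · exact hc g k hgk ⟨w, hwg, hwk⟩ β hg hk
  · exact hc g k hgk ⟨w, hwg, hwk⟩ α hg hk
  · exact hc f k hfk ⟨w, hwf, hwk⟩ β hf hk
  · exact hc f g hfg ⟨w, hwf, hwg⟩ β hf hg
  · exact hc f g hfg ⟨w, hwf, hwg⟩ β hf hg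

end Mgraph

namespace Mgraph

open MgraphAux

attribute [local instance] Classical.propDecidable

variable {G : Mgraph} {D : ℕ}

lemma progress (hG : G.Loopless) (hdeg : ∀ u : G.V, G.degree u ≤ D) (v : G.V)
    (A : Set G.E) (c : G.E → Option (Fin D)) (hc : G.PProper c)
    (hunc : ∀ e, c e = none → e ∉ A → v ∈ G.inc e)
    (hm : D / 2 < {e | c e = none ∧ e ∉ A}.ncard) :
    ∃ c' : G.E → Option (Fin D), G.PProper c' ∧ (∀ e, c' e = none → c e = none) ∧
      {e | c' e = none ∧ e ∉ A}.ncard < {e | c e = none ∧ e ∉ A}.ncard := by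
  classical
  set U : Set G.E := {e | c e = none ∧ e ∉ A} with hU
  -- the other endpoint of an edge at `v`
  set oe : G.E → G.V := fun e => if h : v ∈ G.inc e then Sym2.Mem.other h else v with hoe
  have hoe1 : ∀ e, v ∈ G.inc e → G.inc e = s(v, oe e) := by
    intro e he
    rw [hoe]
    simp only [dif_pos he]
    exact (Sym2.other_spec he).symm
  have hoe2 : ∀ e, v ∈ G.inc e → oe e ≠ v := by
    intro e he h
    apply hG e
    rw [hoe1 e he, h]
    exact Sym2.isDiag_iff_proj_eq.mpr rfl
  have hoeU : ∀ e ∈ U, v ∈ G.inc e := fun e he => hunc e he.1 he.2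
  have hoe3 : ∀ e ∈ U, oe e ∈ G.inc e := by
    intro e he
    rw [hoe1 e (hoeU e he)]
    exact Sym2.mem_mk_right v (oe e)
  have hmemiff : ∀ e ∈ U, ∀ w : G.V, w ∈ G.inc e ↔ (w = v ∨ w = oe e) := by
    intro e he w
    rw [hoe1 e (hoeU e he)]
    exact Sym2.mem_iff
  by_cases H1 : ∃ e ∈ U, ∃ γ : Fin D, γ ∉ G.colorsAt c v ∧ γ ∉ G.colorsAt c (oe e)
  · obtain ⟨e, he, γ, hγv, hγu⟩ := H1
    exact color_step hc he.1 he.2 (fun w hw => by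
      rcases (hmemiff e he w).mp hw with rfl | rfl
      · exact hγv
      · exact hγu)
  push_neg at H1
  have Hdisj : ∀ e ∈ U, ∀ γ : Fin D, γ ∉ G.colorsAt c v → γ ∈ G.colorsAt c (oe e) := by
    intro e he γ h
    by_contra hh
    exact hh (H1 e he γ h)
  by_cases H2 : ∃ e ∈ U, ∃ α β : Fin D, α ∉ G.colorsAt c (oe e) ∧ β ∉ G.colorsAt c v ∧
      ¬ (G.factorGraph {f | c f = some α ∨ c f = some β}).Reachable (oe e) v
  · obtain ⟨e, he, α, β, hα, hβ, hreach⟩ := H2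
    have hαβ : α ≠ β := by
      intro h
      exact hα (h ▸ Hdisj e he β hβ)
    set R : Set G.V :=
      {w | (G.factorGraph {f | c f = some α ∨ c f = some β}).Reachable (oe e) w} with hR
    have hclosed : G.KClosed c α β R := kclosed_reachable c α β (oe e)
    have hvR : v ∉ R := hreach
    have huR : oe e ∈ R := SimpleGraph.Reachable.refl _
    set c₁ := G.swapC c α β R with hc₁
    have hc₁p : G.PProper c₁ := hc.swapC hαβ hclosed
    have hc₁v : β ∉ G.colorsAt c₁ v := by
      rw [hc₁, colorsAt_swapC_notin hclosed hvR]
      exact hβ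
    have hc₁u : β ∉ G.colorsAt c₁ (oe e) := beta_free_swapC hαβ huR hα
    have hc₁e : c₁ e = none := by rw [hc₁]; exact (swapC_none_iff c α β R e).mpr he.1
    have hU₁ : {f | c₁ f = none ∧ f ∉ A} = U := by
      ext f
      rw [hU]
      simp only [Set.mem_setOf_eq, hc₁, swapC_none_iff]
    obtain ⟨c₂, h2p, h2mono, h2lt⟩ := color_step hc₁p hc₁e he.2 (fun w hw => by
      rcases (hmemiff e he w).mp hw with rfl | rfl
      · exact hc₁v
      · exact hc₁u)
    rw [hU₁] at h2lt
    exact ⟨c₂, h2p, fun f hf => (swapC_none_iff c α β R f).mp (h2mono f hf), h2lt⟩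
  push_neg at H2
  -- stuck: derive a contradiction by counting
  exfalso
  have hmU : 1 ≤ U.ncard := by omega
  -- colors at v
  have hcv : (G.colorsAt c v).ncard + U.ncard ≤ D :=
    le_trans (ncard_colorsAt_add_le c v U fun e he => ⟨hoeU e he, he.1⟩) (hdeg v)
  obtain ⟨β, hβ⟩ : ∃ β : Fin D, β ∉ G.colorsAt c v :=
    exists_notMem_of_ncard_lt (by omega)
  -- disjointness of free color sets at distinct neighbours
  have hfree_disj : ∀ e ∈ U, ∀ e' ∈ U, oe e ≠ oe e' → ∀ γ : Fin D,
      γ ∉ G.colorsAt c (oe e) → γ ∉ G.colorsAt c (oe e') → False := by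
    intro e he e' he' hne γ h1 h2
    refine no_three_pendant (G := G.factorGraph {f | c f = some γ ∨ c f = some β})
      (maxdeg2_aux hc γ β) ?_ ?_ ?_ hne (hoe2 e (hoeU e he)) (hoe2 e' (hoeU e' he'))
      (H2 e he γ β h1 hβ) (H2 e' he' γ β h2 hβ)
    · exact pendant_aux hc (δ := β) fun f hf hcf =>
        hcf.resolve_left fun hh => h1 ⟨f, hf, hh⟩
    · exact pendant_aux hc (δ := β) fun f hf hcf =>
        hcf.resolve_left fun hh => h2 ⟨f, hf, hh⟩
    · exact pendant_aux hc (δ := γ) fun f hf hcf =>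
        hcf.resolve_right fun hh => hβ ⟨f, hf, hh⟩
  -- choose, for each vertex w, an injective choice of free colors for the
  -- uncolored edges with far endpoint w
  have hFw : ∀ w : G.V, ∃ fw : G.E → Fin D,
      (∀ f, f ∈ U → oe f = w → fw f ∉ G.colorsAt c w) ∧
      Set.InjOn fw {f | f ∈ U ∧ oe f = w} := by
    intro w
    have hcw : (G.colorsAt c w).ncard + {f | f ∈ U ∧ oe f = w}.ncard ≤ D := by
      refine le_trans (ncard_colorsAt_add_le c w _ ?_) (hdeg w)
      rintro f ⟨hf, rfl⟩
      exact ⟨hoe3 f hf, hf.1⟩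
    have hcard : Nat.card ↥{f | f ∈ U ∧ oe f = w} ≤
        Nat.card ↥((G.colorsAt c w)ᶜ) := by
      rw [Nat.card_coe_set_eq, Nat.card_coe_set_eq, ncard_compl_colorsAt]
      omega
    obtain ⟨emb⟩ := embedding_of_card_le hcard
    refine ⟨fun f => if h : f ∈ U ∧ oe f = w then (emb ⟨f, h⟩).1 else β, ?_, ?_⟩
    · intro f hf1 hf2
      have hmem : f ∈ U ∧ oe f = w := ⟨hf1, hf2⟩
      show (if h : f ∈ U ∧ oe f = w then ((emb ⟨f, h⟩ : ↥((G.colorsAt c w)ᶜ)) : Fin D)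
        else β) ∉ G.colorsAt c w
      rw [dif_pos hmem]
      exact (emb ⟨f, hmem⟩).2
    · intro f hf f' hf' hff'
      dsimp only at hff'
      rw [dif_pos (show f ∈ U ∧ oe f = w from hf), dif_pos (show f' ∈ U ∧ oe f' = w from hf')] at hff'
      have := emb.injective (Subtype.coe_injective hff')
      exact congrArg Subtype.val this
  choose FW hFW1 hFW2 using hFw
  set gg : G.E → Fin D := fun f => FW (oe f) f with hgg
  have hgg_inj : Set.InjOn gg U := by
    intro f hf f' hf' hff'
    by_cases h : oe f = oe f'
    · rw [hgg] at hff'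
      simp only at hff'
      rw [← h] at hff'
      exact hFW2 (oe f) ⟨hf, rfl⟩ ⟨hf', h.symm⟩ hff'
    · exact absurd hff' (fun hh => hfree_disj f hf f' hf' h (gg f)
        (hFW1 (oe f) f hf rfl) (hh ▸ hFW1 (oe f') f' hf' rfl))
  have hgv : ∀ f ∈ U, gg f ∈ G.colorsAt c v := by
    intro f hf
    by_contra hh
    exact hFW1 (oe f) f hf rfl (Hdisj f hf (gg f) hh)
  -- inject U into the colored edges at v
  have hCv : ∀ x : ↥U, ∃ g' : G.E, v ∈ G.inc g' ∧ c g' = some (gg x.1) :=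
    fun x => hgv x.1 x.2
  choose Ψ hΨ1 hΨ2 using hCv
  have hcardU : Nat.card ↥U ≤ Nat.card ↥{f | v ∈ G.inc f ∧ c f ≠ none} := by
    refine Nat.card_le_card_of_injective
      (fun x => ⟨Ψ x, hΨ1 x, by rw [hΨ2 x]; exact fun h => nomatch h⟩) ?_
    intro x y hxy
    have hΨeq : Ψ x = Ψ y := congrArg Subtype.val hxy
    have : some (gg x.1) = some (gg y.1) := by rw [← hΨ2 x, hΨeq, hΨ2 y]
    exact Subtype.ext (hgg_inj x.2 y.2 (Option.some_injective _ this))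
  have hcount : {f | v ∈ G.inc f ∧ c f ≠ none}.ncard + U.ncard ≤ D := by
    rw [← Set.ncard_union_eq ?disj (Set.toFinite _) (Set.toFinite _)]
    case disj =>
      rw [Set.disjoint_left]
      rintro f ⟨-, hne⟩ hfU
      exact hne hfU.1
    have hdv : {e | v ∈ G.inc e}.ncard ≤ D := by rw [← degree_eq_ncard]; exact hdeg v
    refine le_trans (Set.ncard_le_ncard ?_ (Set.toFinite _)) hdv
    rintro f (⟨hf, -⟩ | hf)
    · exact hf
    · exact hoeU f hf
  rw [Nat.card_coe_set_eq, Nat.card_coe_set_eq] at hcardU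
  have h2m : U.ncard * 2 ≤ D := by omega
  have : U.ncard ≤ D / 2 := (Nat.le_div_iff_mul_le (by norm_num)).mpr h2m
  omega

end Mgraph

namespace Mgraph

attribute [local instance] Classical.propDecidable

variable {G : Mgraph} {D : ℕ}

lemma mem_pmap_subtype_iff {α : Type*} {P : α → Prop} {z : Sym2 α} (hz : ∀ a ∈ z, P a)
    (b : {a // P a}) :
    b ∈ z.pmap (fun v hv => (⟨v, hv⟩ : {a // P a})) hz ↔ b.1 ∈ z := by
  rw [Sym2.mem_pmap_iff]
  constructor
  · rintro ⟨a, ha, rfl⟩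
    exact ha
  · intro hb
    exact ⟨b.1, hb, rfl⟩

/-- Repeatedly applying `progress` until at most `D/2` relevant edges stay uncolored. -/
lemma reduce_at_vertex (hG : G.Loopless) (hdeg : ∀ u : G.V, G.degree u ≤ D) (v : G.V)
    (A : Set G.E) : ∀ (n : ℕ) (c : G.E → Option (Fin D)),
    {e | c e = none ∧ e ∉ A}.ncard = n → G.PProper c →
    (∀ e, c e = none → e ∉ A → v ∈ G.inc e) →
    ∃ c' : G.E → Option (Fin D), G.PProper c' ∧ (∀ e, c' e = none → c e = none) ∧
      {e | c' e = none ∧ e ∉ A}.ncard ≤ D / 2 := by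
  intro n
  induction n using Nat.strong_induction_on with
  | _ n ih =>
    intro c hn hc hunc
    by_cases hle : {e | c e = none ∧ e ∉ A}.ncard ≤ D / 2
    · exact ⟨c, hc, fun _ h => h, hle⟩
    · obtain ⟨c₁, h1, h2, h3⟩ := progress hG hdeg v A c hc hunc (by omega)
      obtain ⟨c', h1', h2', h3'⟩ := ih _ (hn ▸ h3) c₁ rfl h1
        (fun e he hA => hunc e (h2 e he) hA)
      exact ⟨c', h1', fun e he => h2 e (h2' e he), h3'⟩

/-- Main induction: coloring all edges except those touching `S` or in `A`, up to
`|S| * ⌊D/2⌋` exceptions. -/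
lemma main_induction (hG : G.Loopless) (hdeg : ∀ u : G.V, G.degree u ≤ D) :
    ∀ (n : ℕ) (S : Set G.V), S.ncard = n → ∀ (A : Set G.E) (c : G.E → Option (Fin D)),
    G.PProper c → (∀ e, c e = none → e ∉ A → ∃ w ∈ G.inc e, w ∈ S) →
    ∃ c' : G.E → Option (Fin D), G.PProper c' ∧ {e | c' e = none ∧ e ∉ A}.ncard ≤ n * (D / 2) := by
  intro n
  induction n with
  | zero =>
    intro S hS A c hc hunc
    refine ⟨c, hc, ?_⟩
    have hSe : S = ∅ := (Set.ncard_eq_zero (Set.toFinite _)).mp hS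
    have : {e | c e = none ∧ e ∉ A} = ∅ := by
      ext e
      simp only [Set.mem_setOf_eq, Set.mem_empty_iff_false, iff_false, not_and]
      intro h1 h2
      obtain ⟨w, -, hwS⟩ := hunc e h1 h2
      rw [hSe] at hwS
      exact hwS
    rw [this]
    simp
  | succ n ih =>
    intro S hS A c hc hunc
    obtain ⟨v, hv⟩ : S.Nonempty := by
      rw [← Set.ncard_pos (Set.toFinite _)]
      omega
    have hS' : (S \ {v}).ncard = n := by
      rw [Set.ncard_diff_singleton_of_mem hv]
      omega
    obtain ⟨c₁, hc₁, hb₁⟩ := ih (S \ {v}) hS' (A ∪ {e | v ∈ G.inc e}) c hc (by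
      intro e he heA
      rw [Set.mem_union, not_or] at heA
      obtain ⟨w, hw, hwS⟩ := hunc e he heA.1
      refine ⟨w, hw, hwS, ?_⟩
      simp only [Set.mem_singleton_iff]
      intro hwv
      exact heA.2 (hwv ▸ hw))
    obtain ⟨c₂, hc₂, hmono₂, hb₂⟩ := reduce_at_vertex hG hdeg v
      (A ∪ {e | c₁ e = none ∧ v ∉ G.inc e}) _ c₁ rfl hc₁ (by
      intro e he heA
      rw [Set.mem_union, not_or] at heA
      by_contra hvni
      exact heA.2 ⟨he, hvni⟩)
    refine ⟨c₂, hc₂, ?_⟩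
    have hsub : {e | c₂ e = none ∧ e ∉ A} ⊆
        {e | c₂ e = none ∧ e ∉ A ∪ {e | c₁ e = none ∧ v ∉ G.inc e}} ∪
        {e | c₁ e = none ∧ e ∉ A ∪ {e | v ∈ G.inc e}} := by
      rintro e ⟨h1, h2⟩
      by_cases h3 : e ∈ A ∪ {e | c₁ e = none ∧ v ∉ G.inc e}
      · right
        rcases h3 with h3 | h3
        · exact absurd h3 h2
        · refine ⟨h3.1, ?_⟩
          rw [Set.mem_union, not_or]
          exact ⟨h2, h3.2⟩
      · exact Or.inl ⟨h1, h3⟩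
    have hcalc := le_trans (Set.ncard_le_ncard hsub (Set.toFinite _))
      (Set.ncard_union_le _ _)
    rw [Nat.succ_mul]
    omega

/-- Transfer an edge coloring of `G.deleteVerts S` to a partial coloring of `G`. -/
lemma bridge1 (S : Set G.V) (h : (G.deleteVerts S).EdgeColorable D) :
    ∃ c : G.E → Option (Fin D), G.PProper c ∧
      ∀ e, c e = none → ∃ w ∈ G.inc e, w ∈ S := by
  obtain ⟨c₀, hc₀⟩ := h
  refine ⟨fun e => if h : ∀ w ∈ G.inc e, w ∉ S then some (c₀ ⟨e, h⟩) else none, ?_, ?_⟩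
  · intro e f hne hshare γ hce hcf
    dsimp only at hce hcf
    obtain ⟨w, hwe, hwf⟩ := hshare
    by_cases he : ∀ w ∈ G.inc e, w ∉ S
    · by_cases hf : ∀ w ∈ G.inc f, w ∉ S
      · rw [dif_pos he] at hce
        rw [dif_pos hf] at hcf
        have hγ : c₀ ⟨e, he⟩ = c₀ ⟨f, hf⟩ :=
          (Option.some_injective _ hce).trans (Option.some_injective _ hcf).symm
        refine hc₀ ⟨e, he⟩ ⟨f, hf⟩ (fun hh => hne (congrArg Subtype.val hh)) ?_ hγ
        refine ⟨⟨w, he w hwe⟩, ?_, ?_⟩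
        · exact (mem_pmap_subtype_iff he ⟨w, he w hwe⟩).mpr hwe
        · exact (mem_pmap_subtype_iff hf ⟨w, he w hwe⟩).mpr hwf
      · rw [dif_neg hf] at hcf
        exact nomatch hcf
    · rw [dif_neg he] at hce
      exact nomatch hce
  · intro e he
    dsimp only at he
    by_cases h : ∀ w ∈ G.inc e, w ∉ S
    · rw [dif_pos h] at he
      exact nomatch he
    · push_neg at h
      obtain ⟨w, hw1, hw2⟩ := h
      exact ⟨w, hw1, hw2⟩

/-- Transfer a partial proper coloring of `G` to an edge coloring of `G` minus the
uncolored edges. -/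
lemma bridge2 (c : G.E → Option (Fin D)) (hc : G.PProper c) :
    (G.deleteEdges {e | c e = none}).EdgeColorable D := by
  refine ⟨fun e' => (c e'.1).get (Option.ne_none_iff_isSome.mp e'.2), ?_⟩
  intro e' f' hne hshare heq
  obtain ⟨w, hwe, hwf⟩ := hshare
  refine hc e'.1 f'.1 (fun h => hne (Subtype.ext h)) ⟨w, hwe, hwf⟩
    ((c e'.1).get (Option.ne_none_iff_isSome.mp e'.2)) (Option.some_get _).symm ?_
  dsimp only at heq
  rw [heq, Option.some_get]

lemma degree_le_maxDegree (w : G.V) : G.degree w ≤ G.maxDegree :=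
  le_csSup (Set.Finite.bddAbove (Set.finite_range _)) ⟨w, rfl⟩

lemma degree_deleteVerts_le (S : Set G.V) (x : (G.deleteVerts S).V) :
    (G.deleteVerts S).degree x ≤ G.degree x.1 := by
  refine Nat.card_le_card_of_injective
    (fun e' => ⟨e'.1.1, (mem_pmap_subtype_iff e'.1.2 x).mp e'.2⟩) ?_
  intro a b hab
  simp only [Subtype.mk.injEq] at hab
  exact Subtype.ext (Subtype.ext hab)

lemma maxDegree_deleteVerts_le (S : Set G.V) :
    (G.deleteVerts S).maxDegree ≤ G.maxDegree := by
  unfold maxDegree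
  rcases Set.eq_empty_or_nonempty (Set.range (G.deleteVerts S).degree) with h | h
  · rw [h]
    simp
  · refine csSup_le h ?_
    rintro d ⟨x, rfl⟩
    exact le_trans (degree_deleteVerts_le S x) (degree_le_maxDegree x.1)

lemma edgeColorable_mono {k l : ℕ} (hkl : k ≤ l) (h : G.EdgeColorable k) :
    G.EdgeColorable l := by
  obtain ⟨c, hc⟩ := h
  exact ⟨fun e => Fin.castLE hkl (c e), fun e f hne hsh hh =>
    hc e f hne hsh (Fin.castLE_injective hkl hh)⟩

lemma edgeColorable_card (G : Mgraph) : G.EdgeColorable (Nat.card G.E) :=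
  ⟨Finite.equivFin G.E, fun e f hne _ hh => hne ((Finite.equivFin G.E).injective hh)⟩

lemma edgeColorable_of_chromaticIndex_le {k : ℕ} (h : G.chromaticIndex ≤ k) :
    G.EdgeColorable k := by
  have hne : {k : ℕ | G.EdgeColorable k}.Nonempty := ⟨Nat.card G.E, edgeColorable_card G⟩
  have hmem : G.chromaticIndex ∈ {k : ℕ | G.EdgeColorable k} := Nat.sInf_mem hne
  exact edgeColorable_mono h hmem

end Mgraph

namespace Mgraph

open MgraphAux

variable {G : Mgraph}

lemma resistance_le_of_deleteVerts (hG : G.Loopless) (S : Set G.V)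
    (h : (G.deleteVerts S).EdgeColorable G.maxDegree) :
    G.resistance ≤ Nat.card ↥S * (G.maxDegree / 2) := by
  obtain ⟨c, hc, hconc⟩ := bridge1 S h
  obtain ⟨c', hc', hb⟩ := main_induction hG (fun u => degree_le_maxDegree u) S.ncard S rfl
    ∅ c hc (fun e he _ => hconc e he)
  have hcol := bridge2 c' hc'
  refine le_trans (Nat.sInf_le ⟨{e | c' e = none}, rfl, hcol⟩) ?_
  rw [Nat.card_coe_set_eq, Nat.card_coe_set_eq]
  have hset : {e | c' e = none} = {e | c' e = none ∧ e ∉ (∅ : Set G.E)} := by simp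
  rw [hset]
  exact hb

lemma deleteVerts_univ_isEmptyE : IsEmpty (G.deleteVerts Set.univ).E := by
  refine ⟨fun e => ?_⟩
  obtain ⟨a, ha⟩ := exists_mem_sym2 (G.inc e.1)
  exact e.2 a ha (Set.mem_univ a)

lemma deleteVerts_univ_chromaticIndex : (G.deleteVerts Set.univ).chromaticIndex = 0 := by
  have he := (deleteVerts_univ_isEmptyE (G := G))
  have hcol : (G.deleteVerts Set.univ).EdgeColorable 0 :=
    ⟨fun e => he.elim e, fun e => he.elim e⟩
  exact Nat.le_zero.mp (Nat.sInf_le hcol)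

lemma deleteVerts_univ_maxDegree : (G.deleteVerts Set.univ).maxDegree = 0 := by
  have hv : IsEmpty (G.deleteVerts Set.univ).V := ⟨fun v => v.2 (Set.mem_univ v.1)⟩
  rw [maxDegree, Set.range_eq_empty]
  simp

lemma deleteVerts_univ_classOne : (G.deleteVerts Set.univ).ClassOne := by
  rw [ClassOne, deleteVerts_univ_chromaticIndex, deleteVerts_univ_maxDegree]

end Mgraph


open Mgraph in
/-- For every finite loopless multigraph `G`:
`r(G) ≤ r_v(G)·⌊Δ(G)/2⌋` and `r(G) ≤ r'_v(G)·⌊Δ(G)/2⌋`. -/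
theorem resistance_le_rv_mul_halfMaxDegree (G : Mgraph) (hG : G.Loopless) :
    G.resistance ≤ G.rv * (G.maxDegree / 2) ∧
    G.resistance ≤ G.rv' * (G.maxDegree / 2) := by
  constructor
  · have hne : {k : ℕ | ∃ S : Set G.V, Nat.card S = k ∧ (G.deleteVerts S).ClassOne}.Nonempty :=
      ⟨Nat.card ↥(Set.univ : Set G.V), Set.univ, rfl, deleteVerts_univ_classOne⟩
    obtain ⟨S, hcard, hclass⟩ := Nat.sInf_mem hne
    have hcol : (G.deleteVerts S).EdgeColorable G.maxDegree :=
      edgeColorable_of_chromaticIndex_le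
        (hclass ▸ maxDegree_deleteVerts_le S :
          (G.deleteVerts S).chromaticIndex ≤ G.maxDegree)
    have := resistance_le_of_deleteVerts hG S hcol
    rw [hcard] at this
    exact this
  · have hne : {k : ℕ | ∃ S : Set G.V, Nat.card S = k ∧
        (G.deleteVerts S).chromaticIndex ≤ G.maxDegree}.Nonempty :=
      ⟨Nat.card ↥(Set.univ : Set G.V), Set.univ, rfl, by
        rw [deleteVerts_univ_chromaticIndex]; exact Nat.zero_le _⟩
    obtain ⟨S, hcard, hchrom⟩ := Nat.sInf_mem hne
    have hcol : (G.deleteVerts S).EdgeColorable G.maxDegree :=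
      edgeColorable_of_chromaticIndex_le hchrom
    have := resistance_le_of_deleteVerts hG S hcol
    rw [hcard] at this
    exact this
end
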